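/- The function Φ is differentiable and its gradient is Lipschitz continuous with constant L_Φ := (L_{f,1} + L_{g,2}C_{f_y}/μ)·(1 + C_{g_{xy}}/μ)²; that is, ‖∇Φ(x₁) − ∇Φ(x₂)‖ ≤ L_Φ‖x₁ − x₂‖ for all x₁, x₂ ∈ ℝ^{d_x}. -/

import Mathlib

noncomputable section

open scoped RealInnerProductSpace Topology
open Set Filter ContinuousLinearMap

/-! ### Auxiliary general lemmas -/

section AuxA
variable {F : Type*} [NormedAddCommGroup F] [InnerProductSpace ℝ F]

lemma aux_line_hasDerivAt (b v : F) (t : ℝ) : HasDerivAt (fun s : ℝ => b + s • v) v t := by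
  simpa using ((hasDerivAt_id t).smul_const v).const_add b

lemma aux_coercive_of_mono {c : F → F} {A : F →L[ℝ] F} {y : F} {μ : ℝ}
    (hA : HasFDerivAt c A y)
    (hm : ∀ w z, μ * ‖w - z‖ ^ 2 ≤ ⟪c w - c z, w - z⟫) (v : F) :
    μ * ‖v‖ ^ 2 ≤ ⟪A v, v⟫ := by
  set q : ℝ → ℝ := fun t => ⟪c (y + t • v), v⟫ with hq
  have hl : HasDerivAt (fun s : ℝ => y + s • v) v 0 := aux_line_hasDerivAt y v 0
  have hA' : HasFDerivAt c A (y + (0 : ℝ) • v) := by simpa using hA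
  have hq0 : HasDerivAt q ⟪A v, v⟫ 0 := by
    have h1 := hA'.comp_hasDerivAt (0 : ℝ) hl
    have h2 := h1.inner ℝ (hasDerivAt_const (0 : ℝ) v)
    simpa [Function.comp, hq] using h2
  have hslope : ∀ t ∈ Ioi (0 : ℝ), μ * ‖v‖ ^ 2 ≤ slope q 0 t := by
    intro t ht
    have ht' : (0 : ℝ) < t := ht
    have h1 : μ * ‖t • v‖ ^ 2 ≤ ⟪c (y + t • v) - c y, t • v⟫ := by
      simpa using hm (y + t • v) y
    have hqt : q t - q 0 = ⟪c (y + t • v) - c y, v⟫ := by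
      simp [hq, inner_sub_left]
    have hs : slope q 0 t = (q t - q 0) / t := by
      rw [slope_def_field]; ring_nf
    rw [hs, hqt, le_div_iff₀ ht']
    rw [real_inner_smul_right, norm_smul, Real.norm_eq_abs, abs_of_pos ht'] at h1
    nlinarith [h1, ht']
  have htend : Tendsto (slope q 0) (𝓝[>] (0 : ℝ)) (𝓝 ⟪A v, v⟫) := by
    have h1 := hasDerivAt_iff_tendsto_slope.mp hq0
    exact h1.mono_left (nhdsWithin_mono _ (fun x hx => ne_of_gt hx))
  exact ge_of_tendsto htend (eventually_nhdsWithin_of_forall hslope)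

lemma aux_exists_inverse [FiniteDimensional ℝ F]
    {A : F →L[ℝ] F} {μ : ℝ} (hμ : 0 < μ) (hc : ∀ v, μ * ‖v‖ ^ 2 ≤ ⟪A v, v⟫) :
    ∃ N : F →L[ℝ] F, A.comp N = ContinuousLinearMap.id ℝ F ∧
      N.comp A = ContinuousLinearMap.id ℝ F ∧ ‖N‖ ≤ 1 / μ := by
  have hlow : ∀ v, μ * ‖v‖ ≤ ‖A v‖ := by
    intro v
    rcases eq_or_ne v 0 with rfl | hv
    · simp
    · have h1 := hc v
      have h2 : ⟪A v, v⟫ ≤ ‖A v‖ * ‖v‖ := real_inner_le_norm _ _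
      have hv' : 0 < ‖v‖ := norm_pos_iff.mpr hv
      nlinarith
  have hinj : Function.Injective (A.toLinearMap) := by
    intro u w huw
    have h0 : A (u - w) = 0 := by
      rw [map_sub]
      exact sub_eq_zero_of_eq huw
    have h1 := hlow (u - w)
    rw [h0, norm_zero] at h1
    have h2 : ‖u - w‖ = 0 := le_antisymm (by nlinarith) (norm_nonneg _)
    exact sub_eq_zero.mp (norm_eq_zero.mp h2)
  have hsurj := LinearMap.injective_iff_surjective.mp hinj
  set e := LinearEquiv.ofBijective A.toLinearMap ⟨hinj, hsurj⟩ with he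
  set N := LinearMap.toContinuousLinearMap (e.symm : F →ₗ[ℝ] F) with hN
  have hNe : ∀ v, A (N v) = v := fun v => e.apply_symm_apply v
  have heN : ∀ v, N (A v) = v := fun v => e.symm_apply_apply v
  refine ⟨N, ?_, ?_, ?_⟩
  · ext v; exact hNe v
  · ext v; exact heN v
  · apply ContinuousLinearMap.opNorm_le_bound _ (by positivity)
    intro v
    have h1 := hlow (N v)
    rw [hNe v] at h1
    rw [div_mul_eq_mul_div, le_div_iff₀ hμ]
    nlinarith [h1]

end AuxA

section AuxB
variable {E F G : Type*} [NormedAddCommGroup E] [NormedSpace ℝ E]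
  [NormedAddCommGroup F] [NormedSpace ℝ F] [NormedAddCommGroup G] [NormedSpace ℝ G]

lemma aux_hasFDerivAt_partial_right {f : E × F → G} {x : E} {y : F}
    (hf : DifferentiableAt ℝ f (x, y)) :
    HasFDerivAt (fun y' => f (x, y')) ((fderiv ℝ f (x, y)).comp (inr ℝ E F)) y :=
  hf.hasFDerivAt.comp y (hasFDerivAt_prodMk_right x y)

lemma aux_hasFDerivAt_partial_left {f : E × F → G} {x : E} {y : F}
    (hf : DifferentiableAt ℝ f (x, y)) :
    HasFDerivAt (fun x' => f (x', y)) ((fderiv ℝ f (x, y)).comp (inl ℝ E F)) x :=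
  hf.hasFDerivAt.comp x (hasFDerivAt_prodMk_left x y)

end AuxB

section AuxC
variable {E F : Type*} [NormedAddCommGroup E] [InnerProductSpace ℝ E]
  [NormedAddCommGroup F] [InnerProductSpace ℝ F] [CompleteSpace E] [CompleteSpace F]

omit [CompleteSpace E] in
lemma aux_grad_inner {φ : F → ℝ} {x : F} (h : DifferentiableAt ℝ φ x) (v : F) :
    ⟪gradient φ x, v⟫ = fderiv ℝ φ x v := by
  have h2 := h.hasGradientAt
  rw [hasGradientAt_iff_hasFDerivAt] at h2
  rw [h2.fderiv]
  simp [InnerProductSpace.toDual_apply_apply]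

omit [CompleteSpace E] in
lemma aux_strong_mono {φ : F → ℝ} {μ : ℝ} (hφ : Differentiable ℝ φ)
    (hsc : StrongConvexOn Set.univ μ φ) (a b : F) :
    μ * ‖a - b‖ ^ 2 ≤ ⟪gradient φ a - gradient φ b, a - b⟫ := by
  set v := a - b with hv
  have hconv : ConvexOn ℝ Set.univ (fun y => φ y - μ / 2 * ‖y‖ ^ 2) :=
    strongConvexOn_iff_convex.mp hsc
  set ψ : ℝ → ℝ := fun t => φ (b + t • v) - μ / 2 * ‖b + t • v‖ ^ 2 with hψ
  have hψconv : ConvexOn ℝ Set.univ ψ := by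
    have h0 := hconv.comp_affineMap (AffineMap.lineMap b a : ℝ →ᵃ[ℝ] F)
    simp only [Set.preimage_univ] at h0
    refine h0.congr fun t _ => ?_
    symm
    simp only [Function.comp_apply, AffineMap.lineMap_apply_module]
    show φ (b + t • v) - μ / 2 * ‖b + t • v‖ ^ 2 = _
    rw [hv]
    have : b + t • (a - b) = (1 - t) • b + t • a := by
      simp [smul_sub, sub_smul]; abel
    rw [this]
  set d : ℝ → ℝ := fun t => ⟪gradient φ (b + t • v), v⟫ - μ / 2 * (⟪b + t • v, v⟫ + ⟪v, b + t • v⟫)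
    with hd
  have hder : ∀ t, HasDerivAt ψ (d t) t := by
    intro t
    have h1 : HasDerivAt (fun s : ℝ => φ (b + s • v)) (⟪gradient φ (b + t • v), v⟫) t := by
      have h2 := (hφ (b + t • v)).hasFDerivAt.comp_hasDerivAt t (aux_line_hasDerivAt b v t)
      rwa [aux_grad_inner (hφ _)]
    have h2 : HasDerivAt (fun s : ℝ => ‖b + s • v‖ ^ 2)
        (⟪b + t • v, v⟫ + ⟪v, b + t • v⟫) t := by
      have h3 := (aux_line_hasDerivAt b v t).inner ℝ (aux_line_hasDerivAt b v t)
      simpa [real_inner_self_eq_norm_sq] using h3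
    exact h1.sub ((h2.const_mul (μ / 2)))
  have h01 : d 0 ≤ d 1 := by
    calc d 0 ≤ slope ψ 0 1 :=
          hψconv.le_slope_of_hasDerivAt (Set.mem_univ 0) (Set.mem_univ 1) one_pos (hder 0)
      _ ≤ d 1 := hψconv.slope_le_of_hasDerivAt (Set.mem_univ 0) (Set.mem_univ 1) one_pos (hder 1)
  have hba : b + (1 : ℝ) • v = a := by simp [hv]
  have hb0 : b + (0 : ℝ) • v = b := by simp
  rw [hd] at h01
  simp only [hba, hb0] at h01
  have hvv : ⟪v, v⟫ = ‖v‖ ^ 2 := real_inner_self_eq_norm_sq v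
  rw [inner_sub_left]
  have e1 : ⟪a, v⟫ + ⟪v, a⟫ - (⟪b, v⟫ + ⟪v, b⟫) = 2 * ⟪v, v⟫ := by
    rw [hv]; simp [inner_sub_left, inner_sub_right, real_inner_comm]; rw [norm_sub_sq_real]; ring
  have key : μ / 2 * (⟪a, v⟫ + ⟪v, a⟫) - μ / 2 * (⟪b, v⟫ + ⟪v, b⟫) = μ * ‖v‖ ^ 2 := by
    linear_combination (μ / 2) * e1 + μ * hvv
  linarith [h01, key]

omit [CompleteSpace E] in
lemma aux_gradient_fderiv_symm {φ : F → ℝ} (hφ : ContDiff ℝ 2 φ) (y v w : F) :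
    ⟪fderiv ℝ (gradient φ) y v, w⟫ = ⟪v, fderiv ℝ (gradient φ) y w⟫ := by
  have hd2 : ContDiff ℝ 1 (fderiv ℝ φ) := hφ.fderiv_right (by norm_num)
  have hx : HasFDerivAt (fderiv ℝ φ) (fderiv ℝ (fderiv ℝ φ) y) y :=
    ((hd2.differentiable one_ne_zero) y).hasFDerivAt
  have hsymm := second_derivative_symmetric
    (fun z => (hφ.differentiable (by norm_num) z).hasFDerivAt) hx
  have hgrad_eq : gradient φ = fun y' => (InnerProductSpace.toDual ℝ F).symm (fderiv ℝ φ y') :=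
    rfl
  have hgd : Differentiable ℝ (gradient φ) := by
    rw [hgrad_eq]
    exact (((InnerProductSpace.toDual ℝ F).symm.contDiff).comp hd2).differentiable one_ne_zero
  have hG : HasFDerivAt (gradient φ) (fderiv ℝ (gradient φ) y) y := (hgd y).hasFDerivAt
  have hkey : ∀ v w : F, ⟪w, fderiv ℝ (gradient φ) y v⟫ = (fderiv ℝ (fderiv ℝ φ) y v) w := by
    intro v w
    have hfg : (fun y' => ⟪w, gradient φ y'⟫) = fun y' => fderiv ℝ φ y' w :=
      funext fun y' => by
        rw [real_inner_comm, aux_grad_inner ((hφ.differentiable (by norm_num)) y')]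
    have h1 : HasFDerivAt (fun y' => ⟪w, gradient φ y'⟫)
        ((innerSL ℝ w).comp (fderiv ℝ (gradient φ) y)) y :=
      (innerSL ℝ w).hasFDerivAt.comp y hG
    have h2 : HasFDerivAt (fun y' => ⟪w, gradient φ y'⟫)
        ((ContinuousLinearMap.apply ℝ ℝ w).comp (fderiv ℝ (fderiv ℝ φ) y)) y := by
      rw [hfg]
      exact (ContinuousLinearMap.apply ℝ ℝ w).hasFDerivAt.comp y hx
    have hu := h1.unique h2
    have h3 := congrFun (congrArg (fun (L : F →L[ℝ] ℝ) => (L : F → ℝ)) hu) v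
    simpa using h3
  rw [real_inner_comm, hkey v w, hkey w v]
  exact hsymm v w

lemma aux_gradY_eq {φ : E × F → ℝ} {x : E} {y : F} (hφ : DifferentiableAt ℝ φ (x, y)) :
    gradient (fun y' => φ (x, y')) y =
      (InnerProductSpace.toDual ℝ F).symm ((fderiv ℝ φ (x, y)).comp (inr ℝ E F)) := by
  simp only [gradient]
  rw [(aux_hasFDerivAt_partial_right hφ).fderiv]

lemma aux_contDiff_grad_partial {φ : E × F → ℝ} (hφ : ContDiff ℝ 2 φ) :
    ContDiff ℝ 1 (fun p : E × F => gradient (fun y' => φ (p.1, y')) p.2) := by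
  have hfun : (fun p : E × F => gradient (fun y' => φ (p.1, y')) p.2)
      = fun p => (InnerProductSpace.toDual ℝ F).symm
          ((fderiv ℝ φ p).comp (inr ℝ E F)) := by
    funext p
    exact aux_gradY_eq (hφ.differentiable (by norm_num) p)
  rw [hfun]
  have hD : ContDiff ℝ 1 fun p : E × F => (fderiv ℝ φ p).comp (inr ℝ E F) :=
    (hφ.fderiv_right (by norm_num)).clm_comp contDiff_const
  exact ((InnerProductSpace.toDual ℝ F).symm.contDiff).comp hD

end AuxC

/-! ### The given definitions -/

variable {dx dy : ℕ}

/-- Partial gradient in the first argument. -/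
def gX (f : EuclideanSpace ℝ (Fin dx) → EuclideanSpace ℝ (Fin dy) → ℝ)
    (x : EuclideanSpace ℝ (Fin dx)) (y : EuclideanSpace ℝ (Fin dy)) :
    EuclideanSpace ℝ (Fin dx) :=
  gradient (fun x' => f x' y) x

/-- Partial gradient in the second argument. -/
def gY (f : EuclideanSpace ℝ (Fin dx) → EuclideanSpace ℝ (Fin dy) → ℝ)
    (x : EuclideanSpace ℝ (Fin dx)) (y : EuclideanSpace ℝ (Fin dy)) :
    EuclideanSpace ℝ (Fin dy) :=
  gradient (fun y' => f x y') y

/-- Second derivative `∇_y∇_y g (x,y)` as a linear map `ℝ^{d_y} → ℝ^{d_y}`. -/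
def gYY (g : EuclideanSpace ℝ (Fin dx) → EuclideanSpace ℝ (Fin dy) → ℝ)
    (x : EuclideanSpace ℝ (Fin dx)) (y : EuclideanSpace ℝ (Fin dy)) :
    EuclideanSpace ℝ (Fin dy) →L[ℝ] EuclideanSpace ℝ (Fin dy) :=
  fderiv ℝ (fun y' => gY g x y') y

/-- Mixed second derivative `∇_x∇_y g (x,y)` as a linear map `ℝ^{d_y} → ℝ^{d_x}`. -/
def gXY (g : EuclideanSpace ℝ (Fin dx) → EuclideanSpace ℝ (Fin dy) → ℝ)
    (x : EuclideanSpace ℝ (Fin dx)) (y : EuclideanSpace ℝ (Fin dy)) :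
    EuclideanSpace ℝ (Fin dy) →L[ℝ] EuclideanSpace ℝ (Fin dx) :=
  ContinuousLinearMap.adjoint (fderiv ℝ (fun x' => gY g x' y) x)

set_option maxHeartbeats 1600000 in
/-- `Φ(x) := f(x, y*(x))` is differentiable with
`L_Φ := (L_{f,1} + L_{g,2} C_{f_y}/μ)(1 + C_{g_{xy}}/μ)²`-Lipschitz gradient. -/
theorem Phi_gradient_lipschitz
    (f g : EuclideanSpace ℝ (Fin dx) → EuclideanSpace ℝ (Fin dy) → ℝ)
    (hf : ContDiff ℝ 2 (Function.uncurry f)) (hg : ContDiff ℝ 2 (Function.uncurry g))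
    (μ Lf1 Lg2 Cfy Cgxy : ℝ) (hμ : 0 < μ)
    (hsc : ∀ x, StrongConvexOn Set.univ μ (fun y => g x y))
    (hfx_lip : ∀ x₁ y₁ x₂ y₂, ‖gX f x₁ y₁ - gX f x₂ y₂‖ ≤ Lf1 * (‖x₁ - x₂‖ + ‖y₁ - y₂‖))
    (hfy_lip : ∀ x₁ y₁ x₂ y₂, ‖gY f x₁ y₁ - gY f x₂ y₂‖ ≤ Lf1 * (‖x₁ - x₂‖ + ‖y₁ - y₂‖))
    (hgxy_lip : ∀ x₁ y₁ x₂ y₂, ‖gXY g x₁ y₁ - gXY g x₂ y₂‖ ≤ Lg2 * (‖x₁ - x₂‖ + ‖y₁ - y₂‖))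
    (hgyy_lip : ∀ x₁ y₁ x₂ y₂, ‖gYY g x₁ y₁ - gYY g x₂ y₂‖ ≤ Lg2 * (‖x₁ - x₂‖ + ‖y₁ - y₂‖))
    (hfy_bd : ∀ x y, ‖gY f x y‖ ≤ Cfy)
    (hgxy_bd : ∀ x y, ‖gXY g x y‖ ≤ Cgxy)
    (ystar : EuclideanSpace ℝ (Fin dx) → EuclideanSpace ℝ (Fin dy))
    (hystar : ∀ x y, g x (ystar x) ≤ g x y) :
    Differentiable ℝ (fun x => f x (ystar x)) ∧
      ∀ x₁ x₂, ‖gradient (fun x => f x (ystar x)) x₁ - gradient (fun x => f x (ystar x)) x₂‖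
        ≤ (Lf1 + Lg2 * Cfy / μ) * (1 + Cgxy / μ) ^ 2 * ‖x₁ - x₂‖ := by
  classical
  set G : EuclideanSpace ℝ (Fin dx) × EuclideanSpace ℝ (Fin dy) → EuclideanSpace ℝ (Fin dy) :=
    fun p => gY g p.1 p.2 with hGdef
  have hgu : Differentiable ℝ (Function.uncurry g) := hg.differentiable (by norm_num)
  have hfu : Differentiable ℝ (Function.uncurry f) := hf.differentiable (by norm_num)
  have hGc : ContDiff ℝ 1 G := aux_contDiff_grad_partial hg
  have hGd : Differentiable ℝ G := hGc.differentiable one_ne_zero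
  have hgpart : ∀ x, Differentiable ℝ (fun y => g x y) := fun x y =>
    (hgu (x, y)).comp y ((differentiableAt_const x).prodMk differentiableAt_id)
  have hmono : ∀ x a b, μ * ‖a - b‖ ^ 2 ≤ ⟪G (x, a) - G (x, b), a - b⟫ := fun x a b =>
    aux_strong_mono (hgpart x) (hsc x) a b
  have hcrit : ∀ x, G (x, ystar x) = 0 := by
    intro x
    have hmin : IsLocalMin (fun y => g x y) (ystar x) := Filter.Eventually.of_forall (hystar x)
    have h0 : fderiv ℝ (fun y => g x y) (ystar x) = 0 := hmin.fderiv_eq_zero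
    show gradient (fun y' => g x y') (ystar x) = 0
    simp [gradient, h0]
  have hCfy0 : 0 ≤ Cfy := le_trans (norm_nonneg _) (hfy_bd 0 0)
  have hCgxy0 : 0 ≤ Cgxy := le_trans (norm_nonneg _) (hgxy_bd 0 0)
  -- Lipschitz of G in the first variable
  have hGpartx : ∀ y, Differentiable ℝ (fun x' => G (x', y)) := fun y z =>
    (hGd (z, y)).comp (g := G) z (differentiableAt_id.prodMk (differentiableAt_const y))
  have hfderiv_eq_gXY : ∀ x y,
      ‖fderiv ℝ (fun x' => G (x', y)) x‖ = ‖gXY g x y‖ := by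
    intro x y
    have h1 : fderiv ℝ (fun x' => G (x', y)) x = fderiv ℝ (fun x' => gY g x' y) x := rfl
    rw [h1]
    exact (ContinuousLinearMap.adjoint.norm_map _).symm
  have hGxlip : ∀ y x₁ x₂, ‖G (x₁, y) - G (x₂, y)‖ ≤ Cgxy * ‖x₁ - x₂‖ := by
    intro y x₁ x₂
    have hbd : ∀ z ∈ Set.univ, ‖fderiv ℝ (fun x' => G (x', y)) z‖ ≤ Cgxy := by
      intro z _
      rw [hfderiv_eq_gXY z y]
      exact hgxy_bd z y
    have h2 := convex_univ.norm_image_sub_le_of_norm_fderiv_le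
      (fun z _ => hGpartx y z) hbd (mem_univ x₂) (mem_univ x₁)
    simpa using h2
  -- ystar is Lipschitz
  have ylip : ∀ x₁ x₂, ‖ystar x₁ - ystar x₂‖ ≤ Cgxy / μ * ‖x₁ - x₂‖ := by
    intro x₁ x₂
    have h1 : μ * ‖ystar x₁ - ystar x₂‖ ^ 2
        ≤ ⟪G (x₁, ystar x₁) - G (x₁, ystar x₂), ystar x₁ - ystar x₂⟫ := hmono x₁ _ _
    rw [hcrit x₁] at h1
    have h2 : (0 : EuclideanSpace ℝ (Fin dy)) - G (x₁, ystar x₂)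
        = G (x₂, ystar x₂) - G (x₁, ystar x₂) := by rw [hcrit x₂]
    rw [h2] at h1
    have h3 : ⟪G (x₂, ystar x₂) - G (x₁, ystar x₂), ystar x₁ - ystar x₂⟫
        ≤ ‖G (x₂, ystar x₂) - G (x₁, ystar x₂)‖ * ‖ystar x₁ - ystar x₂‖ :=
      real_inner_le_norm _ _
    have h4 : ‖G (x₂, ystar x₂) - G (x₁, ystar x₂)‖ ≤ Cgxy * ‖x₁ - x₂‖ := by
      have := hGxlip (ystar x₂) x₂ x₁
      rwa [norm_sub_rev x₂ x₁] at this
    rcases eq_or_lt_of_le (norm_nonneg (ystar x₁ - ystar x₂)) with h5 | h5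
    · rw [← h5]
      positivity
    · rw [div_mul_eq_mul_div, le_div_iff₀ hμ]
      nlinarith [h1, h3, h4, norm_nonneg (x₁ - x₂), h5]
  -- second derivative in y: HasFDerivAt, coercivity, symmetry
  have hGparty : ∀ x, Differentiable ℝ (fun y' => G (x, y')) := fun x y =>
    (hGd (x, y)).comp y ((differentiableAt_const x).prodMk differentiableAt_id)
  have hAder : ∀ x y, HasFDerivAt (fun y' => G (x, y')) (gYY g x y) y := fun x y =>
    (hGparty x y).hasFDerivAt
  have hcoer : ∀ x y v, μ * ‖v‖ ^ 2 ≤ ⟪gYY g x y v, v⟫ := fun x y v =>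
    aux_coercive_of_mono (hAder x y) (fun w z => hmono x w z) v
  have hgC2part : ∀ x, ContDiff ℝ 2 (fun y => g x y) := fun x =>
    hg.comp (contDiff_const.prodMk contDiff_id)
  have hsym : ∀ x y (v w : EuclideanSpace ℝ (Fin dy)),
      ⟪gYY g x y v, w⟫ = ⟪v, gYY g x y w⟫ := fun x y v w =>
    aux_gradient_fderiv_symm (hgC2part x) y v w
  -- inverse of gYY along the minimizer path
  have hinv : ∀ x, ∃ N : EuclideanSpace ℝ (Fin dy) →L[ℝ] EuclideanSpace ℝ (Fin dy),
      (gYY g x (ystar x)).comp N = ContinuousLinearMap.id ℝ _ ∧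
      N.comp (gYY g x (ystar x)) = ContinuousLinearMap.id ℝ _ ∧ ‖N‖ ≤ 1 / μ := fun x =>
    aux_exists_inverse hμ (fun v => hcoer x (ystar x) v)
  choose N hN1 hN2 hN3 using hinv
  have hNA : ∀ x v, N x (gYY g x (ystar x) v) = v := by
    intro x v
    have := congrArg (fun (L : EuclideanSpace ℝ (Fin dy) →L[ℝ] EuclideanSpace ℝ (Fin dy)) => L v)
      (hN2 x)
    simpa using this
  have hAN : ∀ x v, gYY g x (ystar x) (N x v) = v := by
    intro x v
    have := congrArg (fun (L : EuclideanSpace ℝ (Fin dy) →L[ℝ] EuclideanSpace ℝ (Fin dy)) => L v)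
      (hN1 x)
    simpa using this
  -- identification of partial second derivatives
  have hAeq : ∀ x y, gYY g x y = (fderiv ℝ G (x, y)).comp
      (inr ℝ (EuclideanSpace ℝ (Fin dx)) (EuclideanSpace ℝ (Fin dy))) := fun x y =>
    (aux_hasFDerivAt_partial_right (hGd (x, y))).fderiv
  have hBeq : ∀ x y, fderiv ℝ (fun x' => gY g x' y) x = (fderiv ℝ G (x, y)).comp
      (inl ℝ (EuclideanSpace ℝ (Fin dx)) (EuclideanSpace ℝ (Fin dy))) := fun x y =>
    (aux_hasFDerivAt_partial_left (hGd (x, y))).fderiv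
  -- derivative of ystar
  have hYd : ∀ x₀, HasFDerivAt ystar
      (-((N x₀).comp ((fderiv ℝ G (x₀, ystar x₀)).comp
        (inl ℝ (EuclideanSpace ℝ (Fin dx)) (EuclideanSpace ℝ (Fin dy)))))) x₀ := by
    intro x₀
    have hT : HasFDerivAt G (fderiv ℝ G (x₀, ystar x₀)) (x₀, ystar x₀) := (hGd _).hasFDerivAt
    have hy : Tendsto ystar (𝓝 x₀) (𝓝 (ystar x₀)) := by
      rw [tendsto_iff_norm_sub_tendsto_zero]
      apply squeeze_zero (fun x => norm_nonneg _) (fun x => ylip x x₀)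
      have h0 : Tendsto (fun x : EuclideanSpace ℝ (Fin dx) => ‖x - x₀‖) (𝓝 x₀) (𝓝 0) := by
        have hc : Continuous fun x : EuclideanSpace ℝ (Fin dx) => ‖x - x₀‖ :=
          (continuous_id.sub continuous_const).norm
        have h1 := hc.tendsto x₀
        simpa using h1
      simpa using h0.const_mul (Cgxy / μ)
    have hcont : Tendsto (fun x => (x, ystar x)) (𝓝 x₀) (𝓝 (x₀, ystar x₀)) :=
      tendsto_id.prodMk_nhds hy
    have hlo := hT.isLittleO.comp_tendsto hcont
    have hbig : (fun x => (x, ystar x) - (x₀, ystar x₀)) =O[𝓝 x₀] fun x => x - x₀ := by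
      apply Asymptotics.IsBigO.of_bound (1 + Cgxy / μ)
      filter_upwards with x
      rw [Prod.norm_def]
      apply max_le
      · have : (0:ℝ) ≤ Cgxy / μ * ‖x - x₀‖ :=
          mul_nonneg (div_nonneg hCgxy0 hμ.le) (norm_nonneg _)
        show ‖x - x₀‖ ≤ _
        nlinarith [norm_nonneg (x - x₀)]
      · show ‖ystar x - ystar x₀‖ ≤ _
        calc ‖ystar x - ystar x₀‖ ≤ Cgxy / μ * ‖x - x₀‖ := ylip x x₀
          _ ≤ (1 + Cgxy / μ) * ‖x - x₀‖ := by nlinarith [norm_nonneg (x - x₀)]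
    have h2 := hlo.trans_isBigO hbig
    have h4 : (fun x => fderiv ℝ G (x₀, ystar x₀) ((x, ystar x) - (x₀, ystar x₀)))
        =o[𝓝 x₀] fun x => x - x₀ := by
      refine h2.neg_left.congr' (Filter.Eventually.of_forall fun x => ?_)
        Filter.EventuallyEq.rfl
      show -(G (x, ystar x) - G (x₀, ystar x₀)
        - fderiv ℝ G (x₀, ystar x₀) ((x, ystar x) - (x₀, ystar x₀))) = _
      rw [hcrit x, hcrit x₀]
      simp
    have h5 := ((N x₀).isBigO_comp _ (𝓝 x₀)).trans_isLittleO h4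
    have h6 : ∀ x, N x₀ (fderiv ℝ G (x₀, ystar x₀) ((x, ystar x) - (x₀, ystar x₀)))
        = ystar x - ystar x₀ - (-((N x₀).comp ((fderiv ℝ G (x₀, ystar x₀)).comp
          (inl ℝ (EuclideanSpace ℝ (Fin dx)) (EuclideanSpace ℝ (Fin dy)))))) (x - x₀) := by
      intro x
      have hsplit : ((x, ystar x) - (x₀, ystar x₀) :
          EuclideanSpace ℝ (Fin dx) × EuclideanSpace ℝ (Fin dy))
          = (x - x₀, (0 : EuclideanSpace ℝ (Fin dy))) + (0, ystar x - ystar x₀) := by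
        ext <;> simp
      rw [hsplit, map_add, map_add]
      have e2 : fderiv ℝ G (x₀, ystar x₀) ((0 : EuclideanSpace ℝ (Fin dx)), ystar x - ystar x₀)
          = gYY g x₀ (ystar x₀) (ystar x - ystar x₀) := by
        rw [hAeq x₀ (ystar x₀)]
        simp
      rw [e2, hNA]
      have e1 : fderiv ℝ G (x₀, ystar x₀) (x - x₀, (0 : EuclideanSpace ℝ (Fin dy)))
          = ((fderiv ℝ G (x₀, ystar x₀)).comp
            (inl ℝ (EuclideanSpace ℝ (Fin dx)) (EuclideanSpace ℝ (Fin dy)))) (x - x₀) := by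
        simp
      rw [e1]
      simp
      abel
    have h7 := h5.congr' (Filter.Eventually.of_forall h6) Filter.EventuallyEq.rfl
    exact HasFDerivAt.of_isLittleO h7
    -- derivative of Φ
  set Φ : EuclideanSpace ℝ (Fin dx) → ℝ := fun x => f x (ystar x) with hΦdef
  have hfpartx : ∀ x y, DifferentiableAt ℝ (fun x' => f x' y) x := fun x y =>
    (hfu (x, y)).comp (g := Function.uncurry f) (f := fun x' => (x', y)) x
      (differentiableAt_id.prodMk (differentiableAt_const y))
  have hfparty : ∀ x y, DifferentiableAt ℝ (fun y' => f x y') y := fun x y =>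
    (hfu (x, y)).comp y ((differentiableAt_const x).prodMk differentiableAt_id)
  have hPhiD : ∀ x₀, HasFDerivAt Φ
      ((fderiv ℝ (Function.uncurry f) (x₀, ystar x₀)).comp
        ((ContinuousLinearMap.id ℝ (EuclideanSpace ℝ (Fin dx))).prod
          (-((N x₀).comp ((fderiv ℝ G (x₀, ystar x₀)).comp
            (inl ℝ (EuclideanSpace ℝ (Fin dx)) (EuclideanSpace ℝ (Fin dy)))))))) x₀ := by
    intro x₀
    have hs : HasFDerivAt (fun x => (x, ystar x))
        ((ContinuousLinearMap.id ℝ (EuclideanSpace ℝ (Fin dx))).prod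
          (-((N x₀).comp ((fderiv ℝ G (x₀, ystar x₀)).comp
            (inl ℝ (EuclideanSpace ℝ (Fin dx)) (EuclideanSpace ℝ (Fin dy))))))) x₀ :=
      (hasFDerivAt_id x₀).prodMk (hYd x₀)
    exact (hfu (x₀, ystar x₀)).hasFDerivAt.comp x₀ hs
  have hdiff : Differentiable ℝ Φ := fun x₀ => (hPhiD x₀).differentiableAt
  refine ⟨hdiff, ?_⟩
  -- the gradient formula
  have hNsym : ∀ x (a b : EuclideanSpace ℝ (Fin dy)), ⟪a, N x b⟫ = ⟪N x a, b⟫ := by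
    intro x a b
    conv_lhs => rw [← hAN x a]
    rw [hsym x (ystar x) (N x a) (N x b), hAN x b]
  have hgradPhi : ∀ x₀, gradient Φ x₀
      = gX f x₀ (ystar x₀) - gXY g x₀ (ystar x₀) (N x₀ (gY f x₀ (ystar x₀))) := by
    intro x₀
    have key : ∀ u, fderiv ℝ Φ x₀ u
        = ⟪gX f x₀ (ystar x₀) - gXY g x₀ (ystar x₀) (N x₀ (gY f x₀ (ystar x₀))), u⟫ := by
      intro u
      rw [(hPhiD x₀).fderiv]
      have e0 : ((fderiv ℝ (Function.uncurry f) (x₀, ystar x₀)).comp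
          ((ContinuousLinearMap.id ℝ (EuclideanSpace ℝ (Fin dx))).prod
            (-((N x₀).comp ((fderiv ℝ G (x₀, ystar x₀)).comp
              (inl ℝ (EuclideanSpace ℝ (Fin dx)) (EuclideanSpace ℝ (Fin dy)))))))) u
          = fderiv ℝ (Function.uncurry f) (x₀, ystar x₀)
              (u, -(N x₀ ((fderiv ℝ G (x₀, ystar x₀)) (u, 0)))) := by
        simp [ContinuousLinearMap.comp_apply, ContinuousLinearMap.prod_apply]
      rw [e0]
      have hsplit : ((u, -(N x₀ ((fderiv ℝ G (x₀, ystar x₀)) (u, 0)))) :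
          EuclideanSpace ℝ (Fin dx) × EuclideanSpace ℝ (Fin dy))
          = (u, 0) + (0, -(N x₀ ((fderiv ℝ G (x₀, ystar x₀)) (u, 0)))) := by
        ext <;> simp
      rw [hsplit, map_add]
      have e1 : fderiv ℝ (Function.uncurry f) (x₀, ystar x₀)
          ((u, 0) : EuclideanSpace ℝ (Fin dx) × EuclideanSpace ℝ (Fin dy))
          = ⟪gX f x₀ (ystar x₀), u⟫ := by
        have h2 : ⟪gX f x₀ (ystar x₀), u⟫ = fderiv ℝ (fun x' => f x' (ystar x₀)) x₀ u :=
          aux_grad_inner (hfpartx x₀ (ystar x₀)) u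
        have h3 : fderiv ℝ (fun x' => f x' (ystar x₀)) x₀
            = (fderiv ℝ (Function.uncurry f) (x₀, ystar x₀)).comp
              (inl ℝ (EuclideanSpace ℝ (Fin dx)) (EuclideanSpace ℝ (Fin dy))) :=
          (aux_hasFDerivAt_partial_left (hfu (x₀, ystar x₀))).fderiv
        rw [h2, h3]
        simp
      have e2 : ∀ w, fderiv ℝ (Function.uncurry f) (x₀, ystar x₀)
          ((0, w) : EuclideanSpace ℝ (Fin dx) × EuclideanSpace ℝ (Fin dy))
          = ⟪gY f x₀ (ystar x₀), w⟫ := by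
        intro w
        have h2 : ⟪gY f x₀ (ystar x₀), w⟫ = fderiv ℝ (fun y' => f x₀ y') (ystar x₀) w :=
          aux_grad_inner (hfparty x₀ (ystar x₀)) w
        have h3 : fderiv ℝ (fun y' => f x₀ y') (ystar x₀)
            = (fderiv ℝ (Function.uncurry f) (x₀, ystar x₀)).comp
              (inr ℝ (EuclideanSpace ℝ (Fin dx)) (EuclideanSpace ℝ (Fin dy))) :=
          (aux_hasFDerivAt_partial_right (hfu (x₀, ystar x₀))).fderiv
        rw [h2, h3]
        simp
      rw [e1, e2]
      rw [inner_neg_right, hNsym x₀ (gY f x₀ (ystar x₀))]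
      have e3 : ⟪N x₀ (gY f x₀ (ystar x₀)), (fderiv ℝ G (x₀, ystar x₀)) (u, 0)⟫
          = ⟪gXY g x₀ (ystar x₀) (N x₀ (gY f x₀ (ystar x₀))), u⟫ := by
        have h3 : (fderiv ℝ G (x₀, ystar x₀)) ((u, 0) :
            EuclideanSpace ℝ (Fin dx) × EuclideanSpace ℝ (Fin dy))
            = fderiv ℝ (fun x' => gY g x' (ystar x₀)) x₀ u := by
          rw [hBeq x₀ (ystar x₀)]
          simp
        rw [h3]
        exact (ContinuousLinearMap.adjoint_inner_left _ _ _).symm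
      rw [e3, inner_sub_left]
      ring
    have hga : HasGradientAt Φ
        (gX f x₀ (ystar x₀) - gXY g x₀ (ystar x₀) (N x₀ (gY f x₀ (ystar x₀)))) x₀ := by
      rw [hasGradientAt_iff_hasFDerivAt]
      have h0 : (InnerProductSpace.toDual ℝ (EuclideanSpace ℝ (Fin dx)))
          (gX f x₀ (ystar x₀) - gXY g x₀ (ystar x₀) (N x₀ (gY f x₀ (ystar x₀))))
          = fderiv ℝ Φ x₀ := by
        ext u
        rw [InnerProductSpace.toDual_apply_apply]
        exact (key u).symm
      rw [h0]
      exact (hdiff x₀).hasFDerivAt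
    exact hga.gradient
  -- final Lipschitz estimate
  intro x₁ x₂
  rcases Nat.eq_zero_or_pos dx with hdx | hdx
  · subst hdx
    have hx12 : x₁ = x₂ := PiLp.ext fun i => i.elim0
    rw [hx12]
    simp
  · -- nonnegativity of the Lipschitz constants
    have hxp : ∃ xp : EuclideanSpace ℝ (Fin dx), ‖xp‖ = 1 := by
      refine ⟨EuclideanSpace.single ⟨0, hdx⟩ (1 : ℝ), ?_⟩
      rw [EuclideanSpace.norm_single]
      norm_num
    obtain ⟨xp, hxp1⟩ := hxp
    have hLf1 : 0 ≤ Lf1 := by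
      have h1 := le_trans (norm_nonneg _) (hfx_lip xp 0 0 0)
      rw [sub_zero, sub_zero, hxp1] at h1
      simpa using h1
    have hLg2 : 0 ≤ Lg2 := by
      have h1 := le_trans (norm_nonneg _) (hgxy_lip xp 0 0 0)
      rw [sub_zero, sub_zero, hxp1] at h1
      simpa using h1
    have hμ' : (0:ℝ) ≤ 1 / μ := by positivity
    have hδ0 : (0:ℝ) ≤ ‖x₁ - x₂‖ + ‖ystar x₁ - ystar x₂‖ :=
      add_nonneg (norm_nonneg _) (norm_nonneg _)
    have hδd : ‖x₁ - x₂‖ + ‖ystar x₁ - ystar x₂‖ ≤ (1 + Cgxy / μ) * ‖x₁ - x₂‖ := by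
      have h1 := ylip x₁ x₂
      nlinarith [norm_nonneg (x₁ - x₂)]
    -- bounds
    have a1 : ‖gX f x₁ (ystar x₁) - gX f x₂ (ystar x₂)‖
        ≤ Lf1 * (‖x₁ - x₂‖ + ‖ystar x₁ - ystar x₂‖) := hfx_lip x₁ (ystar x₁) x₂ (ystar x₂)
    have hw1 : ‖gY f x₁ (ystar x₁)‖ ≤ Cfy := hfy_bd x₁ (ystar x₁)
    have hww : ‖gY f x₁ (ystar x₁) - gY f x₂ (ystar x₂)‖
        ≤ Lf1 * (‖x₁ - x₂‖ + ‖ystar x₁ - ystar x₂‖) := hfy_lip x₁ (ystar x₁) x₂ (ystar x₂)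
    have hgxyd : ‖gXY g x₁ (ystar x₁) - gXY g x₂ (ystar x₂)‖
        ≤ Lg2 * (‖x₁ - x₂‖ + ‖ystar x₁ - ystar x₂‖) := hgxy_lip x₁ (ystar x₁) x₂ (ystar x₂)
    have hAd : ‖gYY g x₂ (ystar x₂) - gYY g x₁ (ystar x₁)‖
        ≤ Lg2 * (‖x₁ - x₂‖ + ‖ystar x₁ - ystar x₂‖) := by
      have h1 := hgyy_lip x₂ (ystar x₂) x₁ (ystar x₁)
      rwa [norm_sub_rev x₂ x₁, norm_sub_rev (ystar x₂) (ystar x₁)] at h1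
    have heqN : N x₁ - N x₂
        = ((N x₁).comp (gYY g x₂ (ystar x₂) - gYY g x₁ (ystar x₁))).comp (N x₂) := by
      refine ContinuousLinearMap.ext fun v => ?_
      simp only [ContinuousLinearMap.coe_comp', Function.comp_apply,
        ContinuousLinearMap.sub_apply]
      rw [map_sub, hAN x₂, hNA x₁]
    have hNd : ‖N x₁ - N x₂‖
        ≤ 1 / μ * (Lg2 * (‖x₁ - x₂‖ + ‖ystar x₁ - ystar x₂‖)) * (1 / μ) := by
      rw [heqN]
      calc ‖((N x₁).comp (gYY g x₂ (ystar x₂) - gYY g x₁ (ystar x₁))).comp (N x₂)‖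
          ≤ ‖(N x₁).comp (gYY g x₂ (ystar x₂) - gYY g x₁ (ystar x₁))‖ * ‖N x₂‖ :=
            ContinuousLinearMap.opNorm_comp_le _ _
        _ ≤ (‖N x₁‖ * ‖gYY g x₂ (ystar x₂) - gYY g x₁ (ystar x₁)‖) * ‖N x₂‖ :=
            mul_le_mul_of_nonneg_right (ContinuousLinearMap.opNorm_comp_le _ _) (norm_nonneg _)
        _ ≤ 1 / μ * (Lg2 * (‖x₁ - x₂‖ + ‖ystar x₁ - ystar x₂‖)) * (1 / μ) := by
            apply mul_le_mul
            · exact mul_le_mul (hN3 x₁) hAd (norm_nonneg _) hμ'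
            · exact hN3 x₂
            · exact norm_nonneg _
            · exact mul_nonneg hμ' (mul_nonneg hLg2 hδ0)
    have hM2 : ‖(gXY g x₂ (ystar x₂)).comp (N x₂)‖ ≤ Cgxy * (1 / μ) :=
      le_trans (ContinuousLinearMap.opNorm_comp_le _ _)
        (mul_le_mul (hgxy_bd x₂ (ystar x₂)) (hN3 x₂) (norm_nonneg _) hCgxy0)
    have heqM : (gXY g x₁ (ystar x₁)).comp (N x₁) - (gXY g x₂ (ystar x₂)).comp (N x₂)
        = (gXY g x₁ (ystar x₁) - gXY g x₂ (ystar x₂)).comp (N x₁)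
          + (gXY g x₂ (ystar x₂)).comp (N x₁ - N x₂) := by
      refine ContinuousLinearMap.ext fun v => ?_
      simp only [ContinuousLinearMap.coe_comp', Function.comp_apply,
        ContinuousLinearMap.sub_apply, ContinuousLinearMap.add_apply, map_sub]
      abel
    have hMd : ‖(gXY g x₁ (ystar x₁)).comp (N x₁) - (gXY g x₂ (ystar x₂)).comp (N x₂)‖
        ≤ Lg2 * (‖x₁ - x₂‖ + ‖ystar x₁ - ystar x₂‖) * (1 / μ)
          + Cgxy * (1 / μ * (Lg2 * (‖x₁ - x₂‖ + ‖ystar x₁ - ystar x₂‖)) * (1 / μ)) := by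
      rw [heqM]
      refine le_trans (norm_add_le _ _) (add_le_add ?_ ?_)
      · exact le_trans (ContinuousLinearMap.opNorm_comp_le _ _)
          (mul_le_mul hgxyd (hN3 x₁) (norm_nonneg _) (mul_nonneg hLg2 hδ0))
      · exact le_trans (ContinuousLinearMap.opNorm_comp_le _ _)
          (mul_le_mul (hgxy_bd x₂ (ystar x₂)) hNd (norm_nonneg _) hCgxy0)
    have hTsplit : gXY g x₁ (ystar x₁) (N x₁ (gY f x₁ (ystar x₁)))
        - gXY g x₂ (ystar x₂) (N x₂ (gY f x₂ (ystar x₂)))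
        = ((gXY g x₁ (ystar x₁)).comp (N x₁) - (gXY g x₂ (ystar x₂)).comp (N x₂))
            (gY f x₁ (ystar x₁))
          + ((gXY g x₂ (ystar x₂)).comp (N x₂)) (gY f x₁ (ystar x₁) - gY f x₂ (ystar x₂)) := by
      simp only [ContinuousLinearMap.sub_apply, ContinuousLinearMap.coe_comp',
        Function.comp_apply, map_sub]
      abel
    have hT : ‖gXY g x₁ (ystar x₁) (N x₁ (gY f x₁ (ystar x₁)))
        - gXY g x₂ (ystar x₂) (N x₂ (gY f x₂ (ystar x₂)))‖
        ≤ (Lg2 * (‖x₁ - x₂‖ + ‖ystar x₁ - ystar x₂‖) * (1 / μ)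
            + Cgxy * (1 / μ * (Lg2 * (‖x₁ - x₂‖ + ‖ystar x₁ - ystar x₂‖)) * (1 / μ))) * Cfy
          + (Cgxy * (1 / μ)) * (Lf1 * (‖x₁ - x₂‖ + ‖ystar x₁ - ystar x₂‖)) := by
      rw [hTsplit]
      refine le_trans (norm_add_le _ _) (add_le_add ?_ ?_)
      · refine le_trans (ContinuousLinearMap.le_opNorm _ _) ?_
        apply mul_le_mul hMd hw1 (norm_nonneg _)
        have : (0:ℝ) ≤ 1/μ * (Lg2 * (‖x₁ - x₂‖ + ‖ystar x₁ - ystar x₂‖)) * (1/μ) :=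
          mul_nonneg (mul_nonneg hμ' (mul_nonneg hLg2 hδ0)) hμ'
        nlinarith [mul_nonneg (mul_nonneg hLg2 hδ0) hμ', mul_nonneg hCgxy0 this]
      · exact le_trans (ContinuousLinearMap.le_opNorm _ _)
          (mul_le_mul hM2 hww (norm_nonneg _) (mul_nonneg hCgxy0 hμ'))
    have hP0 : (0:ℝ) ≤ Lf1 + Lg2 * Cfy / μ :=
      add_nonneg hLf1 (div_nonneg (mul_nonneg hLg2 hCfy0) hμ.le)
    have hQ0 : (0:ℝ) ≤ 1 + Cgxy / μ :=
      add_nonneg zero_le_one (div_nonneg hCgxy0 hμ.le)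
    rw [hgradPhi x₁, hgradPhi x₂]
    have hrear : gX f x₁ (ystar x₁) - gXY g x₁ (ystar x₁) (N x₁ (gY f x₁ (ystar x₁)))
        - (gX f x₂ (ystar x₂) - gXY g x₂ (ystar x₂) (N x₂ (gY f x₂ (ystar x₂))))
        = (gX f x₁ (ystar x₁) - gX f x₂ (ystar x₂))
          - (gXY g x₁ (ystar x₁) (N x₁ (gY f x₁ (ystar x₁)))
            - gXY g x₂ (ystar x₂) (N x₂ (gY f x₂ (ystar x₂)))) := by
      abel
    rw [hrear]
    calc ‖(gX f x₁ (ystar x₁) - gX f x₂ (ystar x₂))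
          - (gXY g x₁ (ystar x₁) (N x₁ (gY f x₁ (ystar x₁)))
            - gXY g x₂ (ystar x₂) (N x₂ (gY f x₂ (ystar x₂))))‖
        ≤ ‖gX f x₁ (ystar x₁) - gX f x₂ (ystar x₂)‖
          + ‖gXY g x₁ (ystar x₁) (N x₁ (gY f x₁ (ystar x₁)))
            - gXY g x₂ (ystar x₂) (N x₂ (gY f x₂ (ystar x₂)))‖ := norm_sub_le _ _
      _ ≤ Lf1 * (‖x₁ - x₂‖ + ‖ystar x₁ - ystar x₂‖)
          + ((Lg2 * (‖x₁ - x₂‖ + ‖ystar x₁ - ystar x₂‖) * (1 / μ)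
            + Cgxy * (1 / μ * (Lg2 * (‖x₁ - x₂‖ + ‖ystar x₁ - ystar x₂‖)) * (1 / μ))) * Cfy
          + (Cgxy * (1 / μ)) * (Lf1 * (‖x₁ - x₂‖ + ‖ystar x₁ - ystar x₂‖))) :=
            add_le_add a1 hT
      _ = (Lf1 + Lg2 * Cfy / μ) * (1 + Cgxy / μ)
            * (‖x₁ - x₂‖ + ‖ystar x₁ - ystar x₂‖) := by
          field_simp
          ring
      _ ≤ (Lf1 + Lg2 * Cfy / μ) * (1 + Cgxy / μ) * ((1 + Cgxy / μ) * ‖x₁ - x₂‖) :=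
            mul_le_mul_of_nonneg_left hδd (mul_nonneg hP0 hQ0)
      _ = (Lf1 + Lg2 * Cfy / μ) * (1 + Cgxy / μ) ^ 2 * ‖x₁ - x₂‖ := by ring
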